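/- Let (b₀,b₁,…) be a sequence of integers such that p⁽ⁿ⁾ → ∞ as n → ∞, and let (v_n) be the sequence of convergents of [b₀,b₁,…]. Then for every v ∈ ℚ∞ = ℚ ∪ {∞}, the set {k ∈ ℕ : v_k = v} is finite. -/

import Mathlib

open Filter Topology OnePoint

/-- The Möbius map `z ↦ b - 1/z` on the one-point compactification `ℝ∞` of `ℝ`. -/
noncomputable def mob (b : ℤ) (z : OnePoint ℝ) : OnePoint ℝ :=
  Option.elim z ((b : ℝ) : OnePoint ℝ)
    (fun x => if x = 0 then (∞ : OnePoint ℝ) else (((b : ℝ) - 1 / x : ℝ) : OnePoint ℝ))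

/-- Value of a finite continued fraction `[b₀, …, b_m]`, i.e. `s₀(s₁(⋯ s_m(∞)))`. -/
noncomputable def cfVal : List ℤ → OnePoint ℝ
  | [] => ∞
  | b :: t => mob b (cfVal t)

/-- The `n`th convergent `v_n = S_n(∞)` of the continued fraction `[b₀, b₁, …]`. -/
noncomputable def cfConv (b : ℕ → ℤ) (n : ℕ) : OnePoint ℝ :=
  cfVal ((List.range (n + 1)).map b)

/-- `m` is a positive index at which the coefficient is `0`, `1` or `-1`. -/
def badIdx (b : ℕ → ℤ) (m : ℕ) : Prop :=
  1 ≤ m ∧ (b m = 0 ∨ b m = 1 ∨ b m = -1)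

instance (b : ℕ → ℤ) : DecidablePred (badIdx b) := fun m => by
  unfold badIdx; infer_instance

-- The singularization map `Φ` on integer sequences.
open Classical in
noncomputable def Phi (b : ℕ → ℤ) : ℕ → ℤ :=
  if h : ∃ m, badIdx b m then
    let m := Nat.find h
    if b m = 0 then
      fun k => if k + 1 < m then b k
        else if k = m - 1 then b (m - 1) + b (m + 1)
        else b (k + 2)
    else if b m = 1 then
      fun k => if k + 1 < m then b k
        else if k = m - 1 then b (m - 1) - 1
        else if k = m then b (m + 1) - 1
        else b (k + 1)
    else
      fun k => if k + 1 < m then b k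
        else if k = m - 1 then b (m - 1) + 1
        else if k = m then b (m + 1) + 1
        else b (k + 1)
  else b

-- `p(b) ∈ ℕ ∪ {∞}`: the least positive index at which `0`, `1` or `-1` occurs.
open Classical in
noncomputable def pIdx (b : ℕ → ℤ) : ℕ∞ :=
  if h : ∃ m, badIdx b m then (Nat.find h : ℕ∞) else ⊤

/-- `p⁽ⁿ⁾ → ∞` as `n → ∞`. -/
def PTendsToTop (b : ℕ → ℤ) : Prop :=
  ∀ N : ℕ, ∃ M : ℕ, ∀ n ≥ M, (N : ℕ∞) < pIdx (Phi^[n] b)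

/-- `p = liminf pⁿ`, as a natural number (junk value if the liminf is `∞`). -/
noncomputable def pLim (b : ℕ → ℤ) : ℕ :=
  (Filter.liminf (fun n => pIdx (Phi^[n] b)) Filter.atTop).toNat

/-- `q⁽ⁿ⁾ = |b⁽ⁿ⁾_{p-1}|`. -/
noncomputable def qSeq (b : ℕ → ℤ) (n : ℕ) : ℕ :=
  ((Phi^[n] b) (pLim b - 1)).natAbs

/-- Two continued fractions have the same tail. -/
def SameTail (b c : ℕ → ℤ) : Prop := ∃ r s : ℕ, ∀ k : ℕ, b (r + k) = c (s + k)

/-- `bstar` is the limit continued fraction: each coefficient of `Φⁿ(b)` stabilises on it. -/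
def EventuallyCoeff (b bstar : ℕ → ℤ) : Prop :=
  ∀ k : ℕ, ∃ N : ℕ, ∀ n ≥ N, Phi^[n] b k = bstar k

/-- The point of `ℝ∞` represented by the integer fraction `a/b` (`∞` when `b = 0`). -/
noncomputable def intPt (a b : ℤ) : OnePoint ℝ :=
  if b = 0 then ∞ else (((a : ℝ) / (b : ℝ)) : OnePoint ℝ)

/-- Adjacency in the Farey graph: `x = a/b`, `y = c/d` with `ad - bc = ±1`. -/
def FareyAdj (x y : OnePoint ℝ) : Prop :=
  ∃ a b c d : ℤ, x = intPt a b ∧ y = intPt c d ∧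
    (a * d - b * c = 1 ∨ a * d - b * c = -1)

/-- `x` is an extended rational, i.e. a member of `ℚ∞ = ℚ ∪ {∞} ⊆ ℝ∞`. -/
def IsExtRat (x : OnePoint ℝ) : Prop :=
  x = ∞ ∨ ∃ q : ℚ, x = ((q : ℝ) : OnePoint ℝ)

-- One step of the index-tracking sequence, for the current coefficient sequence `c`.
open Classical in
noncomputable def eStep (c : ℕ → ℤ) (e : ℕ) : Option ℕ :=
  if h : ∃ m, badIdx c m then
    let m := Nat.find h
    if c m = 0 then
      if e + 2 ≤ m then Option.some e
      else if e = m - 1 ∨ e = m then (none : Option ℕ)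
      else Option.some (e - 2)
    else
      if e + 2 ≤ m then Option.some e
      else if e = m - 1 then (none : Option ℕ)
      else Option.some (e - 1)
  else Option.some e

/-- The index-tracking sequence `e⁽⁰⁾(k), e⁽¹⁾(k), …` (`none` once it has terminated). -/
noncomputable def eSeq (b : ℕ → ℤ) (k : ℕ) : ℕ → Option ℕ
  | 0 => Option.some k
  | n + 1 => (eSeq b k n).bind (eStep (Phi^[n] b))


section Aux

def MatA (b : ℤ) : Matrix (Fin 2) (Fin 2) ℤ := !![b, -1; 1, 0]
def MatL (l : List ℤ) : Matrix (Fin 2) (Fin 2) ℤ := (l.map MatA).prod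
def nuL (l : List ℤ) : ℤ := MatL l 0 0
def deL (l : List ℤ) : ℤ := MatL l 1 0

lemma MatL_nil : MatL [] = 1 := rfl
lemma MatL_cons (b : ℤ) (t : List ℤ) : MatL (b :: t) = MatA b * MatL t := by simp [MatL]
lemma MatL_append (l l' : List ℤ) : MatL (l ++ l') = MatL l * MatL l' := by simp [MatL]
lemma nuL_nil : nuL [] = 1 := rfl
lemma deL_nil : deL [] = 0 := rfl
lemma nuL_cons (b : ℤ) (t : List ℤ) : nuL (b :: t) = b * nuL t - deL t := by
  simp [nuL, deL, MatL_cons, MatA, Matrix.mul_apply, Fin.sum_univ_two]; ring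
lemma deL_cons (b : ℤ) (t : List ℤ) : deL (b :: t) = nuL t := by
  simp [nuL, deL, MatL_cons, MatA, Matrix.mul_apply, Fin.sum_univ_two]
lemma det_MatL (l : List ℤ) : (MatL l).det = 1 := by
  induction l with
  | nil => simp [MatL]
  | cons b t ih => rw [MatL_cons, Matrix.det_mul, ih, mul_one]; simp [MatA, Matrix.det_fin_two_of]
lemma coprime_nuL_deL (l : List ℤ) : IsCoprime (nuL l) (deL l) := by
  have h := det_MatL l
  rw [Matrix.det_fin_two] at h
  exact ⟨MatL l 1 1, -(MatL l 0 1), by rw [← h]; unfold nuL deL; ring⟩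
lemma nuL_ne_zero_of_deL_eq_zero {l : List ℤ} (h : deL l = 0) : nuL l ≠ 0 := by
  have hc := coprime_nuL_deL l
  rw [h] at hc
  have h1 := isCoprime_zero_right.mp hc
  intro hx
  rw [hx] at h1
  exact not_isUnit_zero h1

lemma intPt_neg (a b : ℤ) : intPt (-a) (-b) = intPt a b := by
  unfold intPt
  by_cases hb : b = 0 <;> simp [hb, neg_div_neg_eq]

lemma intPt_inj {a b c d : ℤ} (hab : IsCoprime a b) (hcd : IsCoprime c d)
    (h : intPt a b = intPt c d) : (c = a ∧ d = b) ∨ (c = -a ∧ d = -b) := by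
  unfold intPt at h
  by_cases hb : b = 0
  · rw [if_pos hb] at h
    by_cases hd : d = 0
    · subst hb hd
      have ha := isCoprime_zero_right.mp hab
      have hc := isCoprime_zero_right.mp hcd
      rw [Int.isUnit_iff] at ha hc
      rcases ha with ha | ha <;> rcases hc with hc | hc <;> subst ha <;> subst hc <;> simp
    · rw [if_neg hd] at h
      exact absurd h.symm (OnePoint.coe_ne_infty _)
  · rw [if_neg hb] at h
    by_cases hd : d = 0
    · rw [if_pos hd] at h
      exact absurd h (OnePoint.coe_ne_infty _)
    · rw [if_neg hd] at h
      have h2 : (a : ℝ) / b = c / d := OnePoint.coe_eq_coe.mp h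
      have hbR : (b : ℝ) ≠ 0 := Int.cast_ne_zero.mpr hb
      have hdR : (d : ℝ) ≠ 0 := Int.cast_ne_zero.mpr hd
      have h3 : (a : ℝ) * d = c * b := by
        field_simp at h2
        linarith [h2]
      have h4 : a * d = c * b := by exact_mod_cast h3
      have hbd : b ∣ d := by
        have : b ∣ d * a := ⟨c, by linarith [h4, mul_comm c b]⟩
        exact (hab.symm).dvd_of_dvd_mul_right this
      have hdb : d ∣ b := by
        have : d ∣ b * c := ⟨a, by linarith [h4]⟩
        exact (hcd.symm).dvd_of_dvd_mul_right this
      obtain ⟨t, ht⟩ := hbd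
      obtain ⟨s, hs⟩ := hdb
      have hts : t * s = 1 := by
        have : b * (t * s) = b * 1 := by rw [mul_one]; rw [ht] at hs; linarith [hs]
        exact mul_left_cancel₀ hb this
      rcases Int.eq_one_or_neg_one_of_mul_eq_one' hts with ⟨h1, _⟩ | ⟨h1, _⟩
      · left
        subst h1
        rw [mul_one] at ht
        refine ⟨?_, ht⟩
        have h5 : a * d = c * d := by rw [h4, ht]
        exact (mul_right_cancel₀ hd h5).symm
      · right
        subst h1
        rw [mul_neg_one] at ht
        refine ⟨?_, ht⟩
        have h5 : (-a) * d = c * d := by rw [neg_mul, h4, ht]; ring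
        exact (mul_right_cancel₀ hd h5).symm

lemma cfVal_eq_intPt (l : List ℤ) : cfVal l = intPt (nuL l) (deL l) := by
  induction l with
  | nil => simp [cfVal, nuL_nil, deL_nil, intPt]
  | cons b t ih =>
    rw [show cfVal (b :: t) = mob b (cfVal t) from rfl, ih, nuL_cons, deL_cons]
    by_cases hd : deL t = 0
    · have hn : nuL t ≠ 0 := nuL_ne_zero_of_deL_eq_zero hd
      rw [intPt, if_pos hd]
      show ((b:ℝ) : OnePoint ℝ) = intPt (b * nuL t - deL t) (nuL t)
      rw [intPt, if_neg hn, hd]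
      congr 1
      have : (nuL t : ℝ) ≠ 0 := Int.cast_ne_zero.mpr hn
      push_cast
      field_simp
      simp
    · rw [intPt, if_neg hd]
      show (if ((nuL t : ℝ)/(deL t : ℝ)) = 0 then (∞ : OnePoint ℝ) else _) = _
      have hdR : (deL t : ℝ) ≠ 0 := Int.cast_ne_zero.mpr hd
      by_cases hn : nuL t = 0
      · rw [if_pos (by simp [hn]), intPt, if_pos (by simp [hn])]
      · have hnR : (nuL t : ℝ) ≠ 0 := Int.cast_ne_zero.mpr hn
        rw [if_neg (by simp [div_eq_zero_iff, hnR, hdR]), intPt, if_neg hn]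
        congr 1
        push_cast
        field_simp

lemma growth (l : List ℤ) (hl : ∀ x ∈ l, 2 ≤ |x|) :
    |deL l| < |nuL l| ∧ (l.length : ℤ) < |nuL l| := by
  induction l with
  | nil => simp [nuL_nil, deL_nil]
  | cons b t ih =>
    have hb : 2 ≤ |b| := hl b (List.mem_cons_self)
    obtain ⟨ih1, ih2⟩ := ih (fun x hx => hl x (List.mem_cons_of_mem b hx))
    rw [nuL_cons, deL_cons]
    have key : |nuL t| + 1 ≤ |b * nuL t - deL t| := by
      have h1 : |b * nuL t| - |deL t| ≤ |b * nuL t - deL t| := abs_sub_abs_le_abs_sub _ _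
      rw [abs_mul] at h1
      nlinarith [abs_nonneg (nuL t), abs_nonneg (deL t)]
    constructor
    · linarith
    · simp only [List.length_cons]
      push_cast
      linarith

def seg (b : ℕ → ℤ) (i n : ℕ) : List ℤ := (List.range n).map (fun j => b (i + j))

lemma seg_zero (b : ℕ → ℤ) (i : ℕ) : seg b i 0 = [] := rfl

lemma seg_succ (b : ℕ → ℤ) (i n : ℕ) : seg b i (n + 1) = b i :: seg b (i + 1) n := by
  unfold seg
  rw [List.range_succ_eq_map, List.map_cons, List.map_map]
  simp only [Nat.add_zero]
  congr 1
  apply List.map_congr_left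
  intro j _
  simp only [Function.comp]
  congr 1
  omega

lemma seg_append (b : ℕ → ℤ) (i m n : ℕ) :
    seg b i (m + n) = seg b i m ++ seg b (i + m) n := by
  induction m generalizing i with
  | zero => simp [seg_zero]
  | succ m ih =>
    rw [show m + 1 + n = (m + n) + 1 by ring, seg_succ, seg_succ, ih (i+1)]
    simp [Nat.add_assoc, Nat.add_comm 1 m]

lemma seg_congr {b c : ℕ → ℤ} {i i' n : ℕ} (h : ∀ j < n, b (i + j) = c (i' + j)) :
    seg b i n = seg c i' n := by
  unfold seg
  apply List.map_congr_left
  intro j hj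
  exact h j (List.mem_range.mp hj)

lemma cfConv_eq_seg (b : ℕ → ℤ) (n : ℕ) : cfConv b n = cfVal (seg b 0 (n + 1)) := by
  unfold cfConv
  congr 1
  unfold seg
  apply List.map_congr_left
  intro j _
  rw [Nat.zero_add]

lemma cfVal_congr_col {l₁ l₂ : List ℤ} (h1 : nuL l₁ = nuL l₂) (h2 : deL l₁ = deL l₂) :
    cfVal l₁ = cfVal l₂ := by rw [cfVal_eq_intPt, cfVal_eq_intPt, h1, h2]

lemma cfVal_congr_col_neg {l₁ l₂ : List ℤ} (h1 : nuL l₁ = -nuL l₂) (h2 : deL l₁ = -deL l₂) :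
    cfVal l₁ = cfVal l₂ := by
  rw [cfVal_eq_intPt, cfVal_eq_intPt, h1, h2, intPt_neg]

lemma col_append (P S : List ℤ) (i : Fin 2) :
    MatL (P ++ S) i 0 = MatL P i 0 * nuL S + MatL P i 1 * deL S := by
  rw [MatL_append, Matrix.mul_apply, Fin.sum_univ_two]
  rfl

-- matrix identities
lemma matA_id0 (x y : ℤ) : MatA x * MatA 0 * MatA y = -MatA (x + y) := by
  ext i j
  fin_cases i <;> fin_cases j <;>
    simp [MatA, Matrix.mul_apply, Fin.sum_univ_two] <;> ring

lemma matA_id1 (x y : ℤ) : MatA x * MatA 1 * MatA y = MatA (x - 1) * MatA (y - 1) := by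
  ext i j
  fin_cases i <;> fin_cases j <;>
    simp [MatA, Matrix.mul_apply, Fin.sum_univ_two] <;> ring

lemma matA_idm1 (x y : ℤ) : MatA x * MatA (-1) * MatA y = -(MatA (x + 1) * MatA (y + 1)) := by
  ext i j
  fin_cases i <;> fin_cases j <;>
    simp [MatA, Matrix.mul_apply, Fin.sum_univ_two] <;> ring

end Aux

section T
variable (c : ℕ → ℤ) (h : ∃ m, badIdx c m)

lemma find_pos : 1 ≤ Nat.find h := (Nat.find_spec h).1

lemma Phi_low {k : ℕ} (hk : k + 1 < Nat.find h) : Phi c k = c k := by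
  unfold Phi
  rw [dif_pos h]
  by_cases h0 : c (Nat.find h) = 0
  · rw [if_pos h0, if_pos hk]
  · rw [if_neg h0]
    by_cases h1 : c (Nat.find h) = 1
    · rw [if_pos h1, if_pos hk]
    · rw [if_neg h1, if_pos hk]

lemma Phi_m1_0 (h0 : c (Nat.find h) = 0) :
    Phi c (Nat.find h - 1) = c (Nat.find h - 1) + c (Nat.find h + 1) := by
  have hm := find_pos c h
  unfold Phi
  rw [dif_pos h]
  rw [if_pos h0, if_neg (by omega), if_pos rfl]

lemma Phi_high_0 (h0 : c (Nat.find h) = 0) {k : ℕ} (hk : Nat.find h ≤ k) :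
    Phi c k = c (k + 2) := by
  have hm := find_pos c h
  unfold Phi
  rw [dif_pos h]
  rw [if_pos h0, if_neg (by omega), if_neg (by omega)]

lemma Phi_m1_1 (h1 : c (Nat.find h) = 1) :
    Phi c (Nat.find h - 1) = c (Nat.find h - 1) - 1 := by
  have hm := find_pos c h
  unfold Phi
  rw [dif_pos h]
  rw [if_neg (by rw [h1]; norm_num), if_pos h1, if_neg (by omega), if_pos rfl]

lemma Phi_m_1 (h1 : c (Nat.find h) = 1) :
    Phi c (Nat.find h) = c (Nat.find h + 1) - 1 := by
  have hm := find_pos c h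
  unfold Phi
  rw [dif_pos h]
  rw [if_neg (by rw [h1]; norm_num), if_pos h1, if_neg (by omega), if_neg (by omega), if_pos rfl]

lemma Phi_high_1 (h1 : c (Nat.find h) = 1) {k : ℕ} (hk : Nat.find h + 1 ≤ k) :
    Phi c k = c (k + 1) := by
  have hm := find_pos c h
  unfold Phi
  rw [dif_pos h]
  rw [if_neg (by rw [h1]; norm_num), if_pos h1, if_neg (by omega), if_neg (by omega),
    if_neg (by omega)]

lemma Phi_m1_neg1 (h1 : c (Nat.find h) = -1) :
    Phi c (Nat.find h - 1) = c (Nat.find h - 1) + 1 := by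
  have hm := find_pos c h
  unfold Phi
  rw [dif_pos h]
  rw [if_neg (by rw [h1]; norm_num), if_neg (by rw [h1]; norm_num), if_neg (by omega), if_pos rfl]

lemma Phi_m_neg1 (h1 : c (Nat.find h) = -1) :
    Phi c (Nat.find h) = c (Nat.find h + 1) + 1 := by
  have hm := find_pos c h
  unfold Phi
  rw [dif_pos h]
  rw [if_neg (by rw [h1]; norm_num), if_neg (by rw [h1]; norm_num), if_neg (by omega),
    if_neg (by omega), if_pos rfl]

lemma Phi_high_neg1 (h1 : c (Nat.find h) = -1) {k : ℕ} (hk : Nat.find h + 1 ≤ k) :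
    Phi c k = c (k + 1) := by
  have hm := find_pos c h
  unfold Phi
  rw [dif_pos h]
  rw [if_neg (by rw [h1]; norm_num), if_neg (by rw [h1]; norm_num), if_neg (by omega),
    if_neg (by omega), if_neg (by omega)]

lemma Phi_nobad (c : ℕ → ℤ) (h : ¬ ∃ m, badIdx c m) : Phi c = c := by
  unfold Phi
  rw [dif_neg h]

end T

section Conv
variable (c : ℕ → ℤ) (h : ∃ m, badIdx c m)

lemma cfVal_congr_mat {l₁ l₂ : List ℤ} (hm : MatL l₁ = MatL l₂) : cfVal l₁ = cfVal l₂ :=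
  cfVal_congr_col (by unfold nuL; rw [hm]) (by unfold deL; rw [hm])

lemma cfVal_congr_matneg {l₁ l₂ : List ℤ} (hm : MatL l₁ = -MatL l₂) : cfVal l₁ = cfVal l₂ :=
  cfVal_congr_col_neg (by unfold nuL; rw [hm]; simp) (by unfold deL; rw [hm]; simp)

lemma nuL_append (P S : List ℤ) : nuL (P ++ S) = nuL P * nuL S + MatL P 0 1 * deL S := by
  rw [nuL, col_append]; rfl

lemma deL_append (P S : List ℤ) : deL (P ++ S) = deL P * nuL S + MatL P 1 1 * deL S := by
  rw [deL, col_append]; rfl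

/-- prefix preservation -/
lemma conv_Phi_low {k : ℕ} (hk : k + 2 ≤ Nat.find h) : cfConv (Phi c) k = cfConv c k := by
  rw [cfConv_eq_seg, cfConv_eq_seg]
  congr 1
  exact seg_congr (fun j hj => Phi_low c h (by omega))

lemma seg_prefix_eq : seg (Phi c) 0 (Nat.find h - 1) = seg c 0 (Nat.find h - 1) :=
  seg_congr (fun j hj => Phi_low c h (by omega))

lemma conv_Phi_high_0 (h0 : c (Nat.find h) = 0) {k : ℕ} (hk : Nat.find h ≤ k + 1) :
    cfConv (Phi c) k = cfConv c (k + 2) := by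
  have hm := find_pos c h
  set m := Nat.find h with hmdef
  set t := k + 1 - m with htdef
  rw [cfConv_eq_seg, cfConv_eq_seg]
  have e1 : seg (Phi c) 0 (k + 1) = seg c 0 (m-1) ++
      ((c (m-1) + c (m+1)) :: seg c (m+2) t) := by
    rw [show k + 1 = (m-1) + (t+1) by omega, seg_append, Nat.zero_add, seg_succ]
    rw [seg_prefix_eq c h]
    congr 1
    rw [Phi_m1_0 c h h0]
    congr 1
    exact seg_congr (fun j hj => by
      rw [show m - 1 + 1 + j = m + j by omega, Phi_high_0 c h h0 (by omega)]
      congr 1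
      omega)
  have e2 : seg c 0 (k + 2 + 1) = seg c 0 (m-1) ++
      (c (m-1) :: c m :: c (m+1) :: seg c (m+2) t) := by
    rw [show k + 2 + 1 = (m-1) + (t+3) by omega, seg_append, Nat.zero_add]
    congr 1
    rw [show t + 3 = (t+2) + 1 by ring, seg_succ, show t + 2 = (t+1)+1 by ring, seg_succ,
      seg_succ]
    rw [show m - 1 + 1 = m by omega, show m + 1 + 1 = m + 2 by omega]
  rw [e1, e2, h0]
  apply cfVal_congr_matneg
  simp only [MatL_append, MatL_cons, ← mul_assoc, matA_id0 (c (m-1)) (c (m+1))]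
  simp [mul_assoc]

lemma conv_Phi_high_1 (h1 : c (Nat.find h) = 1) {k : ℕ} (hk : Nat.find h ≤ k + 1) :
    cfConv (Phi c) k = cfConv c (k + 1) := by
  have hm := find_pos c h
  set m := Nat.find h with hmdef
  set t := k + 1 - m with htdef
  rw [cfConv_eq_seg, cfConv_eq_seg]
  rcases Nat.eq_zero_or_pos t with ht0 | htpos
  · -- k + 1 = m
    have e1 : seg (Phi c) 0 (k + 1) = seg c 0 (m-1) ++ [c (m-1) - 1] := by
      rw [show k + 1 = (m-1) + 1 by omega, seg_append, Nat.zero_add, seg_prefix_eq c h]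
      congr 1
      rw [show seg (Phi c) (m-1) 1 = [Phi c (m-1)] from by rw [seg_succ, seg_zero]]
      rw [Phi_m1_1 c h h1]
    have e2 : seg c 0 (k + 1 + 1) = seg c 0 (m-1) ++ [c (m-1), c m] := by
      rw [show k + 1 + 1 = (m-1) + 2 by omega, seg_append, Nat.zero_add]
      congr 1
      rw [show (2:ℕ) = 1 + 1 from rfl, seg_succ, seg_succ, seg_zero,
        show m - 1 + 1 = m by omega]
    rw [e1, e2, h1]
    apply cfVal_congr_col <;>
    · simp [nuL_append, deL_append, nuL_cons, deL_cons, nuL_nil, deL_nil]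
      try ring
  · -- t ≥ 1
    obtain ⟨s, hs⟩ : ∃ s, t = s + 1 := ⟨t - 1, by omega⟩
    have e1 : seg (Phi c) 0 (k + 1) = seg c 0 (m-1) ++
        ((c (m-1) - 1) :: (c (m+1) - 1) :: seg c (m+2) s) := by
      rw [show k + 1 = (m-1) + (s+2) by omega, seg_append, Nat.zero_add, seg_prefix_eq c h,
        seg_succ, seg_succ]
      congr 1
      rw [Phi_m1_1 c h h1]
      congr 1
      rw [show m - 1 + 1 = m by omega, Phi_m_1 c h h1]
      congr 1
      exact seg_congr (fun j hj => by
        rw [show m + 1 + j = (m + 1 + j) by rfl, Phi_high_1 c h h1 (by omega)]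
        congr 1
        omega)
    have e2 : seg c 0 (k + 1 + 1) = seg c 0 (m-1) ++
        (c (m-1) :: c m :: c (m+1) :: seg c (m+2) s) := by
      rw [show k + 1 + 1 = (m-1) + (s+3) by omega, seg_append, Nat.zero_add]
      congr 1
      rw [show s + 3 = (s+2) + 1 by ring, seg_succ, show s + 2 = (s+1)+1 by ring, seg_succ,
        seg_succ, show m - 1 + 1 = m by omega, show m + 1 + 1 = m + 2 by omega]
    rw [e1, e2, h1]
    apply cfVal_congr_mat
    simp only [MatL_append, MatL_cons, ← mul_assoc, matA_id1 (c (m-1)) (c (m+1))]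

lemma conv_Phi_high_neg1 (h1 : c (Nat.find h) = -1) {k : ℕ} (hk : Nat.find h ≤ k + 1) :
    cfConv (Phi c) k = cfConv c (k + 1) := by
  have hm := find_pos c h
  set m := Nat.find h with hmdef
  set t := k + 1 - m with htdef
  rw [cfConv_eq_seg, cfConv_eq_seg]
  rcases Nat.eq_zero_or_pos t with ht0 | htpos
  · have e1 : seg (Phi c) 0 (k + 1) = seg c 0 (m-1) ++ [c (m-1) + 1] := by
      rw [show k + 1 = (m-1) + 1 by omega, seg_append, Nat.zero_add, seg_prefix_eq c h]
      congr 1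
      rw [show seg (Phi c) (m-1) 1 = [Phi c (m-1)] from by rw [seg_succ, seg_zero]]
      rw [Phi_m1_neg1 c h h1]
    have e2 : seg c 0 (k + 1 + 1) = seg c 0 (m-1) ++ [c (m-1), c m] := by
      rw [show k + 1 + 1 = (m-1) + 2 by omega, seg_append, Nat.zero_add]
      congr 1
      rw [show (2:ℕ) = 1 + 1 from rfl, seg_succ, seg_succ, seg_zero,
        show m - 1 + 1 = m by omega]
    rw [e1, e2, h1]
    apply cfVal_congr_col_neg <;>
    · simp [nuL_append, deL_append, nuL_cons, deL_cons, nuL_nil, deL_nil]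
      try ring
  · obtain ⟨s, hs⟩ : ∃ s, t = s + 1 := ⟨t - 1, by omega⟩
    have e1 : seg (Phi c) 0 (k + 1) = seg c 0 (m-1) ++
        ((c (m-1) + 1) :: (c (m+1) + 1) :: seg c (m+2) s) := by
      rw [show k + 1 = (m-1) + (s+2) by omega, seg_append, Nat.zero_add, seg_prefix_eq c h,
        seg_succ, seg_succ]
      congr 1
      rw [Phi_m1_neg1 c h h1]
      congr 1
      rw [show m - 1 + 1 = m by omega, Phi_m_neg1 c h h1]
      congr 1
      exact seg_congr (fun j hj => by
        rw [Phi_high_neg1 c h h1 (k := m + 1 + j) (by omega)]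
        congr 1
        omega)
    have e2 : seg c 0 (k + 1 + 1) = seg c 0 (m-1) ++
        (c (m-1) :: c m :: c (m+1) :: seg c (m+2) s) := by
      rw [show k + 1 + 1 = (m-1) + (s+3) by omega, seg_append, Nat.zero_add]
      congr 1
      rw [show s + 3 = (s+2) + 1 by ring, seg_succ, show s + 2 = (s+1)+1 by ring, seg_succ,
        seg_succ, show m - 1 + 1 = m by omega, show m + 1 + 1 = m + 2 by omega]
    rw [e1, e2, h1]
    apply cfVal_congr_matneg
    simp only [MatL_append, MatL_cons, ← mul_assoc, matA_idm1 (c (m-1)) (c (m+1))]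
    simp [mul_assoc]

/-- when `c m = 0`, `v_m = v_{m-2}`. -/
lemma conv_skip_0 (h0 : c (Nat.find h) = 0) (hm2 : 2 ≤ Nat.find h) :
    cfConv c (Nat.find h) = cfConv c (Nat.find h - 2) := by
  set m := Nat.find h with hmdef
  rw [cfConv_eq_seg, cfConv_eq_seg]
  have e1 : seg c 0 (m + 1) = seg c 0 (m-1) ++ [c (m-1), c m] := by
    rw [show m + 1 = (m-1) + 2 by omega, seg_append, Nat.zero_add]
    congr 1
    rw [show (2:ℕ) = 1 + 1 from rfl, seg_succ, seg_succ, seg_zero, show m - 1 + 1 = m by omega]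
  rw [e1, h0, show m - 2 + 1 = m - 1 by omega]
  apply cfVal_congr_col_neg <;>
  · simp [nuL_append, deL_append, nuL_cons, deL_cons, nuL_nil, deL_nil]
    try ring

end Conv

section EStep
variable (c : ℕ → ℤ)

lemma eStep_nobad (h : ¬ ∃ m, badIdx c m) (e : ℕ) : eStep c e = Option.some e := by
  unfold eStep
  rw [dif_neg h]

lemma eStep_char {e f : ℕ} (hb : ∃ m, badIdx c m) (hf : eStep c e = Option.some f) :
    (e + 2 ≤ Nat.find hb ∧ f = e) ∨
    (Nat.find hb + 1 ≤ e ∧ c (Nat.find hb) = 0 ∧ f = e - 2) ∨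
    (Nat.find hb ≤ e ∧ c (Nat.find hb) ≠ 0 ∧ f = e - 1) := by
  have hm := find_pos c hb
  unfold eStep at hf
  rw [dif_pos hb] at hf
  by_cases h0 : c (Nat.find hb) = 0
  · rw [if_pos h0] at hf
    by_cases hg : e + 2 ≤ Nat.find hb
    · rw [if_pos hg] at hf
      exact Or.inl ⟨hg, (Option.some_inj.mp hf).symm⟩
    · rw [if_neg hg] at hf
      by_cases hd : e = Nat.find hb - 1 ∨ e = Nat.find hb
      · rw [if_pos hd] at hf; exact absurd hf (by simp)
      · rw [if_neg hd] at hf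
        push_neg at hd
        exact Or.inr (Or.inl ⟨by omega, h0, (Option.some_inj.mp hf).symm⟩)
  · rw [if_neg h0] at hf
    by_cases hg : e + 2 ≤ Nat.find hb
    · rw [if_pos hg] at hf
      exact Or.inl ⟨hg, (Option.some_inj.mp hf).symm⟩
    · rw [if_neg hg] at hf
      by_cases hd : e = Nat.find hb - 1
      · rw [if_pos hd] at hf; exact absurd hf (by simp)
      · rw [if_neg hd] at hf
        exact Or.inr (Or.inr ⟨by omega, h0, (Option.some_inj.mp hf).symm⟩)

lemma eStep_none_char {e : ℕ} (hb : ∃ m, badIdx c m) (hf : eStep c e = none) :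
    e = Nat.find hb - 1 ∨ (c (Nat.find hb) = 0 ∧ e = Nat.find hb) := by
  unfold eStep at hf
  rw [dif_pos hb] at hf
  by_cases h0 : c (Nat.find hb) = 0
  · rw [if_pos h0] at hf
    by_cases hg : e + 2 ≤ Nat.find hb
    · rw [if_pos hg] at hf; exact absurd hf (by simp)
    · rw [if_neg hg] at hf
      by_cases hd : e = Nat.find hb - 1 ∨ e = Nat.find hb
      · rcases hd with hd | hd
        · exact Or.inl hd
        · exact Or.inr ⟨h0, hd⟩
      · rw [if_neg hd] at hf; exact absurd hf (by simp)
  · rw [if_neg h0] at hf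
    by_cases hg : e + 2 ≤ Nat.find hb
    · rw [if_pos hg] at hf; exact absurd hf (by simp)
    · rw [if_neg hg] at hf
      by_cases hd : e = Nat.find hb - 1
      · exact Or.inl hd
      · rw [if_neg hd] at hf; exact absurd hf (by simp)

/-- step preserves convergent values -/
lemma eStep_value {e f : ℕ} (hf : eStep c e = Option.some f) :
    cfConv (Phi c) f = cfConv c e := by
  by_cases hb : ∃ m, badIdx c m
  · have hm := find_pos c hb
    have hspec := (Nat.find_spec hb).2
    rcases eStep_char c hb hf with ⟨hg, rfl⟩ | ⟨hg, h0, rfl⟩ | ⟨hg, h0, rfl⟩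
    · exact conv_Phi_low c hb hg
    · rw [conv_Phi_high_0 c hb h0 (by omega)]
      congr 1
      omega
    · have h1 : c (Nat.find hb) = 1 ∨ c (Nat.find hb) = -1 := by
        rcases hspec with h | h | h
        · exact absurd h h0
        · exact Or.inl h
        · exact Or.inr h
      rcases h1 with h1 | h1
      · rw [conv_Phi_high_1 c hb h1 (by omega)]
        congr 1
        omega
      · rw [conv_Phi_high_neg1 c hb h1 (by omega)]
        congr 1
        omega
  · rw [eStep_nobad c hb] at hf
    rw [Phi_nobad c hb, Option.some_inj.mp hf]

lemma eStep_order {e e' f f' : ℕ} (hf : eStep c e = Option.some f)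
    (hf' : eStep c e' = Option.some f') (hlt : e < e') : f < f' := by
  by_cases hb : ∃ m, badIdx c m
  · have hm := find_pos c hb
    rcases eStep_char c hb hf with ⟨hg, rfl⟩ | ⟨hg, h0, rfl⟩ | ⟨hg, h0, rfl⟩ <;>
      rcases eStep_char c hb hf' with ⟨hg', rfl⟩ | ⟨hg', h0', rfl⟩ | ⟨hg', h0', rfl⟩ <;>
      omega
  · rw [eStep_nobad c hb] at hf hf'
    rw [← Option.some_inj.mp hf, ← Option.some_inj.mp hf']
    exact hlt

lemma eStep_le {e f : ℕ} (hf : eStep c e = Option.some f) : f ≤ e := by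
  by_cases hb : ∃ m, badIdx c m
  · rcases eStep_char c hb hf with ⟨hg, rfl⟩ | ⟨hg, h0, rfl⟩ | ⟨hg, h0, rfl⟩ <;> omega
  · rw [eStep_nobad c hb] at hf
    rw [← Option.some_inj.mp hf]

end EStep

section ESeq
variable (b : ℕ → ℤ)

lemma eSeq_zero (k : ℕ) : eSeq b k 0 = Option.some k := rfl

lemma eSeq_succ (k n : ℕ) : eSeq b k (n+1) = (eSeq b k n).bind (eStep (Phi^[n] b)) := rfl

lemma eSeq_value {k n e : ℕ} (he : eSeq b k n = Option.some e) :
    cfConv (Phi^[n] b) e = cfConv b k := by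
  induction n generalizing e with
  | zero =>
    rw [eSeq_zero] at he
    rw [Option.some_inj.mp he]
    rfl
  | succ n ih =>
    rw [eSeq_succ] at he
    obtain ⟨e', he', hstep⟩ := Option.bind_eq_some_iff.mp he
    rw [Function.iterate_succ_apply', eStep_value _ hstep, ih he']

lemma eSeq_order {j k n ej ek : ℕ} (hjk : j < k) (hj : eSeq b j n = Option.some ej)
    (hk : eSeq b k n = Option.some ek) : ej < ek := by
  induction n generalizing ej ek with
  | zero =>
    rw [eSeq_zero] at hj hk
    rw [← Option.some_inj.mp hj, ← Option.some_inj.mp hk]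
    exact hjk
  | succ n ih =>
    rw [eSeq_succ] at hj hk
    obtain ⟨e', he', hstep⟩ := Option.bind_eq_some_iff.mp hj
    obtain ⟨f', hf', hstep'⟩ := Option.bind_eq_some_iff.mp hk
    exact eStep_order _ hstep hstep' (ih he' hf')

lemma eSeq_mono {k n n' e e' : ℕ} (hnn : n ≤ n') (he : eSeq b k n = Option.some e)
    (he' : eSeq b k n' = Option.some e') : e' ≤ e := by
  induction n' generalizing e' with
  | zero =>
    have : n = 0 := by omega
    subst this
    rw [he] at he'
    rw [Option.some_inj.mp he']
  | succ n' ih =>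
    rcases Nat.lt_or_ge n (n'+1) with hlt | hge
    · rw [eSeq_succ] at he'
      obtain ⟨f, hf, hstep⟩ := Option.bind_eq_some_iff.mp he'
      have := ih (by omega) hf
      have := eStep_le _ hstep
      omega
    · have : n = n' + 1 := by omega
      subst this
      rw [he] at he'
      rw [Option.some_inj.mp he']

end ESeq

section Zone

lemma mem_seg {b : ℕ → ℤ} {i n : ℕ} {x : ℤ} (hx : x ∈ seg b i n) : ∃ j < n, x = b (i + j) := by
  unfold seg at hx
  obtain ⟨j, hj, rfl⟩ := List.mem_map.mp hx
  exact ⟨j, List.mem_range.mp hj, rfl⟩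

lemma seg_length (b : ℕ → ℤ) (i n : ℕ) : (seg b i n).length = n := by
  unfold seg
  rw [List.length_map, List.length_range]

lemma good_abs {x : ℤ} (h0 : x ≠ 0) (h1 : x ≠ 1) (h2 : x ≠ -1) : 2 ≤ |x| := by
  rcases le_or_gt 0 x with h | h
  · rw [abs_of_nonneg h]; omega
  · rw [abs_of_neg h]; omega

/-- The zone lemma: an occurrence of `intPt a d` at index `e` with good entries forces
`e < |d|`. -/
lemma zone (c : ℕ → ℤ) (e : ℕ) (hgood : ∀ i, 1 ≤ i → i ≤ e → 2 ≤ |c i|) {a d : ℤ}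
    (hcop : IsCoprime a d) (hv : cfConv c e = intPt a d) : (e : ℤ) < |d| := by
  rw [cfConv_eq_seg, cfVal_eq_intPt] at hv
  have habs : |d| = |deL (seg c 0 (e+1))| := by
    rcases intPt_inj (coprime_nuL_deL _) hcop hv with ⟨_, hd⟩ | ⟨_, hd⟩
    · rw [hd]
    · rw [hd, abs_neg]
  have hsplit : seg c 0 (e + 1) = c 0 :: seg c 1 e := by
    rw [seg_succ]
  have hde : deL (seg c 0 (e+1)) = nuL (seg c 1 e) := by
    rw [hsplit, deL_cons]
  have hg := growth (seg c 1 e) (fun x hx => by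
    obtain ⟨j, hj, rfl⟩ := mem_seg hx
    exact hgood (1 + j) (by omega) (by omega))
  rw [seg_length] at hg
  rw [habs, hde]
  exact hg.2

lemma good_of_lt_find {c : ℕ → ℤ} (hb : ∃ m, badIdx c m) {i : ℕ} (h1 : 1 ≤ i)
    (h2 : i < Nat.find hb) : 2 ≤ |c i| := by
  have := Nat.find_min hb h2
  unfold badIdx at this
  push_neg at this
  obtain ⟨hx, hy, hz⟩ := this h1
  exact good_abs hx hy hz

lemma good_of_nobad {c : ℕ → ℤ} (hb : ¬ ∃ m, badIdx c m) {i : ℕ} (h1 : 1 ≤ i) : 2 ≤ |c i| := by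
  push_neg at hb
  have := hb i
  unfold badIdx at this
  push_neg at this
  obtain ⟨hx, hy, hz⟩ := this h1
  exact good_abs hx hy hz

lemma pIdx_lt {c : ℕ → ℤ} (hb : ∃ m, badIdx c m) {N : ℕ} (h : (N : ℕ∞) < pIdx c) :
    N < Nat.find hb := by
  unfold pIdx at h
  rw [dif_pos hb] at h
  exact_mod_cast h

end Zone

/-- **Lemma 7.** If `p⁽ⁿ⁾ → ∞`, then no extended rational occurs infinitely often among
the convergents of `[b₀, b₁, …]`. -/
theorem stmt14 (b : ℕ → ℤ) (hp : PTendsToTop b) (v : OnePoint ℝ) (hv : IsExtRat v) :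
    {k : ℕ | cfConv b k = v}.Finite := by
  classical
  obtain ⟨a, d, hcop, hvd⟩ : ∃ a d : ℤ, IsCoprime a d ∧ v = intPt a d := by
    rcases hv with rfl | ⟨q, rfl⟩
    · exact ⟨1, 0, isCoprime_one_left, by simp [intPt]⟩
    · refine ⟨q.num, (q.den : ℤ), ?_, ?_⟩
      · rw [Int.isCoprime_iff_gcd_eq_one]
        simpa [Int.gcd] using q.reduced
      · unfold intPt
        rw [if_neg (by exact_mod_cast q.den_nz)]
        congr 1
        rw [Rat.cast_def]
        norm_num
  set S := {k : ℕ | cfConv b k = v} with hS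
  set Q := d.natAbs with hQ
  obtain ⟨M, hM⟩ := hp (Q + 2)
  -- no occurrence of `v` dies at a stage `≥ M`
  have noDeath : ∀ k ∈ S, ∀ n, M ≤ n → ∀ e, eSeq b k n = Option.some e →
      ∃ f, eSeq b k (n+1) = Option.some f := by
    intro k hk n hn e he
    have h2 : eSeq b k (n+1) = eStep (Phi^[n] b) e := by
      rw [eSeq_succ, he]
      rfl
    cases hstep : eStep (Phi^[n] b) e with
    | some f => exact ⟨f, by rw [h2, hstep]⟩
    | none =>
      exfalso
      have hb : ∃ m, badIdx (Phi^[n] b) m := by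
        by_contra hnb
        rw [eStep_nobad _ hnb] at hstep
        simp at hstep
      have hfind : Q + 2 < Nat.find hb := pIdx_lt hb (hM n hn)
      have hval : cfConv (Phi^[n] b) e = intPt a d := by
        rw [eSeq_value b he]
        exact hk.trans hvd
      rcases eStep_none_char _ hb hstep with hd | ⟨h0, hd⟩
      · subst hd
        have hz := zone (Phi^[n] b) (Nat.find hb - 1)
          (fun i h1 h2 => good_of_lt_find hb h1 (by omega)) hcop hval
        have : ((Nat.find hb - 1 : ℕ) : ℤ) < (Q : ℤ) := by
          rw [hQ, ← Int.abs_eq_natAbs]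
          exact hz
        have hzn : Nat.find hb - 1 < Q := by exact_mod_cast this
        omega
      · subst hd
        have hskip := conv_skip_0 _ hb h0 (by omega)
        rw [hskip] at hval
        have hz := zone (Phi^[n] b) (Nat.find hb - 2)
          (fun i h1 h2 => good_of_lt_find hb h1 (by omega)) hcop hval
        have : ((Nat.find hb - 2 : ℕ) : ℤ) < (Q : ℤ) := by
          rw [hQ, ← Int.abs_eq_natAbs]
          exact hz
        have hzn : Nat.find hb - 2 < Q := by exact_mod_cast this
        omega
  -- once alive at stage M, alive forever
  have alive : ∀ k ∈ S, (∃ e, eSeq b k M = Option.some e) →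
      ∀ n, M ≤ n → ∃ e, eSeq b k n = Option.some e := by
    intro k hk hA n hn
    induction n, hn using Nat.le_induction with
    | base => exact hA
    | succ n hn ih =>
      obtain ⟨e, he⟩ := ih
      exact noDeath k hk n hn e he
  -- stabilization and bound
  have stab : ∀ k ∈ S, (∃ e, eSeq b k M = Option.some e) →
      ∃ e N, e < Q ∧ ∀ n, N ≤ n → eSeq b k n = Option.some e := by
    intro k hk hA
    have halive := alive k hk hA
    have hT : ({e | ∃ n, M ≤ n ∧ eSeq b k n = Option.some e}).Nonempty := by
      obtain ⟨e, he⟩ := hA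
      exact ⟨e, M, le_refl M, he⟩
    obtain ⟨e₁, ⟨n₁, hn₁, he₁⟩, hmin⟩ := WellFounded.has_min Nat.lt_wfRel.wf _ hT
    have hconst : ∀ n, n₁ ≤ n → eSeq b k n = Option.some e₁ := by
      intro n hn
      obtain ⟨e, he⟩ := halive n (le_trans hn₁ hn)
      have hle : e ≤ e₁ := eSeq_mono b hn he₁ he
      have hnlt : ¬ e < e₁ := hmin e ⟨n, le_trans hn₁ hn, he⟩
      have he' : e = e₁ := by omega
      rw [← he']
      exact he
    refine ⟨e₁, n₁, ?_, hconst⟩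
    set c := Phi^[n₁] b with hc
    have hval : cfConv c e₁ = intPt a d := by
      rw [eSeq_value b he₁]
      exact hk.trans hvd
    have hbound : (e₁ : ℤ) < |d| := by
      by_cases hb : ∃ m, badIdx c m
      · have hfind : Q + 2 < Nat.find hb := pIdx_lt hb (hM n₁ hn₁)
        have h' := hconst (n₁ + 1) (Nat.le_succ n₁)
        rw [eSeq_succ, hconst n₁ (le_refl _)] at h'
        have hstep : eStep c e₁ = Option.some e₁ := h'
        have hm := find_pos c hb
        have hg : e₁ + 2 ≤ Nat.find hb := by
          rcases eStep_char c hb hstep with ⟨hg, _⟩ | ⟨hg, _, hgg⟩ | ⟨hg, _, hgg⟩ <;> omega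
        exact zone c e₁ (fun i h1 h2 => good_of_lt_find hb h1 (by omega)) hcop hval
      · exact zone c e₁ (fun i h1 h2 => good_of_nobad hb h1) hcop hval
    have : (e₁ : ℤ) < (Q : ℤ) := by
      rw [hQ, ← Int.abs_eq_natAbs]
      exact hbound
    exact_mod_cast this
  -- decomposition of S
  have hsub : S ⊆ (⋃ j ∈ Set.Iio M,
        {k | ∃ e, eSeq b k j = Option.some e ∧ eStep (Phi^[j] b) e = none})
      ∪ {k | k ∈ S ∧ ∃ e, eSeq b k M = Option.some e} := by
    intro k hk
    cases hA : eSeq b k M with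
    | some e => exact Or.inr ⟨hk, e, hA⟩
    | none =>
      left
      have hex : ∃ n, eSeq b k n = none := ⟨M, hA⟩
      have hn₂ : eSeq b k (Nat.find hex) = none := Nat.find_spec hex
      have hpos : Nat.find hex ≠ 0 := by
        intro h0
        rw [h0, eSeq_zero] at hn₂
        simp at hn₂
      obtain ⟨j, hj⟩ : ∃ j, Nat.find hex = j + 1 := ⟨Nat.find hex - 1, by omega⟩
      have hjlt : eSeq b k j ≠ none := Nat.find_min hex (by omega)
      obtain ⟨e, he⟩ := Option.ne_none_iff_exists'.mp hjlt
      rw [hj, eSeq_succ, he] at hn₂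
      have hstep : eStep (Phi^[j] b) e = none := hn₂
      have hjM : Nat.find hex ≤ M := Nat.find_le hA
      simp only [Set.mem_iUnion]
      exact ⟨j, by simp [Set.mem_Iio]; omega, e, he, hstep⟩
  apply Set.Finite.subset _ hsub
  apply Set.Finite.union
  · apply Set.Finite.biUnion (Set.finite_Iio M)
    intro j _
    by_cases hb : ∃ m, badIdx (Phi^[j] b) m
    · apply Set.Finite.of_finite_image (f := fun k => (eSeq b k j).getD 0)
      · apply Set.Finite.subset ((Set.finite_singleton (Nat.find hb)).insert (Nat.find hb - 1))
        rintro x ⟨k, ⟨e, he, hstep⟩, rfl⟩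
        dsimp only
        rw [he]
        simp only [Option.getD_some, Set.mem_insert_iff, Set.mem_singleton_iff]
        rcases eStep_none_char _ hb hstep with h | ⟨_, h⟩
        · exact Or.inl h
        · exact Or.inr h
      · intro k1 hk1 k2 hk2 hf
        obtain ⟨e1, he1, _⟩ := hk1
        obtain ⟨e2, he2, _⟩ := hk2
        simp only [he1, he2, Option.getD_some] at hf
        by_contra hne
        rcases Nat.lt_or_ge k1 k2 with h | h
        · have := eSeq_order b h he1 he2
          omega
        · have hlt : k2 < k1 := by omega
          have := eSeq_order b hlt he2 he1
          omega
    · convert Set.finite_empty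
      ext k
      simp only [Set.mem_setOf_eq, Set.mem_empty_iff_false, iff_false]
      rintro ⟨e, he, hstep⟩
      rw [eStep_nobad _ hb] at hstep
      simp at hstep
  · have key : ∀ k, k ∈ {k | k ∈ S ∧ ∃ e, eSeq b k M = Option.some e} →
        ∃ e, e < Q ∧ ∃ N, ∀ n, N ≤ n → eSeq b k n = Option.some e := by
      rintro k ⟨hk, hA⟩
      obtain ⟨e, N, hlt, hconst⟩ := stab k hk hA
      exact ⟨e, hlt, N, hconst⟩
    apply Set.Finite.of_finite_image
      (f := fun k => if h : k ∈ {k | k ∈ S ∧ ∃ e, eSeq b k M = Option.some e}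
        then (key k h).choose else 0)
    · apply Set.Finite.subset (Set.finite_Iio Q)
      rintro x ⟨k, hk, rfl⟩
      dsimp only
      rw [dif_pos hk]
      exact ((key k hk).choose_spec).1
    · intro k1 hk1 k2 hk2 hf
      simp only [dif_pos hk1, dif_pos hk2] at hf
      obtain ⟨hlt1, N1, hc1⟩ := (key k1 hk1).choose_spec
      obtain ⟨hlt2, N2, hc2⟩ := (key k2 hk2).choose_spec
      by_contra hne
      rcases Nat.lt_or_ge k1 k2 with h | h
      · have := eSeq_order b h (hc1 (max N1 N2) (le_max_left _ _))
          (hc2 (max N1 N2) (le_max_right _ _))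
        omega
      · have hlt : k2 < k1 := by omega
        have := eSeq_order b hlt (hc2 (max N1 N2) (le_max_right _ _))
          (hc1 (max N1 N2) (le_max_left _ _))
        omega
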